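/- For norm-one quaternions a, b, the map T_{a,b} : ℍ → ℍ, x ↦ axb, is an involution distinct from ±id if and only if a² = b² = −1 (equivalently, a and b are purely imaginary unit quaternions). -/

import Mathlib

lemma real_of_comm (A : Quaternion ℝ) (h : ∀ x : Quaternion ℝ, A * x = x * A) :
    A = ((A.re : ℝ) : Quaternion ℝ) := by
  obtain ⟨e1, he1⟩ : ∃ x : Quaternion ℝ, x.re = 0 ∧ x.imI = 1 ∧ x.imJ = 0 ∧ x.imK = 0 :=
    ⟨(Quaternion.equivTuple ℝ).symm ![0,1,0,0], rfl, rfl, rfl, rfl⟩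
  obtain ⟨e2, he2⟩ : ∃ x : Quaternion ℝ, x.re = 0 ∧ x.imI = 0 ∧ x.imJ = 1 ∧ x.imK = 0 :=
    ⟨(Quaternion.equivTuple ℝ).symm ![0,0,1,0], rfl, rfl, rfl, rfl⟩
  have h1 := h e1
  have h2 := h e2
  rw [Quaternion.ext_iff] at h1 h2 ⊢
  simp [Quaternion.re_mul, Quaternion.imI_mul, Quaternion.imJ_mul, Quaternion.imK_mul, he1, he2] at h1 h2 ⊢
  refine ⟨?_, ?_, ?_⟩ <;> linarith [h1.1, h1.2, h2.1, h2.2]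

lemma no_central_sqrt_neg_one (a : Quaternion ℝ) (h : ∀ x : Quaternion ℝ, a * x = x * a)
    (h2 : a ^ 2 = -1) : False := by
  have ha := real_of_comm a h
  rw [ha] at h2
  rw [sq, ← Quaternion.coe_mul, Quaternion.ext_iff] at h2
  have := h2.1
  simp [Quaternion.re_one] at this
  nlinarith [this]

theorem stmt_4 (a b : Quaternion ℝ) (ha : ‖a‖ = 1) (hb : ‖b‖ = 1) :
    ((∀ x : Quaternion ℝ, a * (a * x * b) * b = x) ∧
      ¬ (∀ x : Quaternion ℝ, a * x * b = x) ∧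
      ¬ (∀ x : Quaternion ℝ, a * x * b = -x)) ↔ (a ^ 2 = -1 ∧ b ^ 2 = -1) := by
  have ha0 : a ≠ 0 := by intro h; rw [h, norm_zero] at ha; norm_num at ha
  constructor
  · rintro ⟨h1, h2, h3⟩
    have hAB : (a * a) * (b * b) = 1 := by
      have := h1 1
      calc (a * a) * (b * b) = a * (a * 1 * b) * b := by noncomm_ring
        _ = 1 := this
    have hBA : (b * b) * (a * a) = 1 := by
      have hinv : b * b = (a * a)⁻¹ := eq_inv_of_mul_eq_one_right hAB
      rw [hinv]
      exact inv_mul_cancel₀ (mul_ne_zero ha0 ha0)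
    have hcomm : ∀ x : Quaternion ℝ, (a * a) * x = x * (a * a) := by
      intro x
      have hx : (a * a) * x * (b * b) = x := by
        have := h1 x
        calc (a * a) * x * (b * b) = a * (a * x * b) * b := by noncomm_ring
          _ = x := this
      calc (a * a) * x = (a * a) * x * ((b * b) * (a * a)) := by rw [hBA, mul_one]
        _ = ((a * a) * x * (b * b)) * (a * a) := by noncomm_ring
        _ = x * (a * a) := by rw [hx]
    have hreal := real_of_comm (a * a) hcomm
    set r := (a * a).re with hr
    have hr2 : r ^ 2 = 1 := by
      have hn : Quaternion.normSq (a * a) = 1 := by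
        rw [map_mul]
        have hna : Quaternion.normSq a = 1 := by
          rw [Quaternion.normSq_eq_norm_mul_self, ha]; norm_num
        rw [hna]; norm_num
      rw [hreal, Quaternion.normSq_coe] at hn
      nlinarith [hn]
    have hcases : r = 1 ∨ r = -1 := by
      rcases mul_eq_zero.mp (show (r - 1) * (r + 1) = 0 by nlinarith) with h | h
      · left; linarith
      · right; linarith
    rcases hcases with h | h
    · exfalso
      have haa : a * a = 1 := by rw [hreal, h]; norm_num
      have hbb : b * b = 1 := by
        have h' := hAB; rw [haa, one_mul] at h'; exact h'
      rcases mul_self_eq_one_iff.mp haa with rfl | rfl <;>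
        rcases mul_self_eq_one_iff.mp hbb with rfl | rfl
      · exact h2 (fun x => by simp)
      · exact h3 (fun x => by simp)
      · exact h3 (fun x => by simp)
      · exact h2 (fun x => by simp [neg_mul, mul_neg])
    · have haa : a * a = -1 := by rw [hreal, h]; norm_num
      have hbb : b * b = -1 := by
        have h' := hAB; rw [haa] at h'
        have : b * b = -(-1 * (b * b)) := by noncomm_ring
        rw [this, h']
      exact ⟨by rw [sq, haa], by rw [sq, hbb]⟩
  · rintro ⟨ha2, hb2⟩
    refine ⟨?_, ?_, ?_⟩
    · intro x
      calc a * (a * x * b) * b = (a ^ 2) * x * (b ^ 2) := by rw [sq, sq]; noncomm_ring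
        _ = x := by rw [ha2, hb2]; noncomm_ring
    · intro h
      have hxa := h a
      rw [show a * a * b = a ^ 2 * b by rw [sq], ha2] at hxa
      have hb' : b = -a := by
        have : -b = a := by rw [← hxa]; noncomm_ring
        rw [← this, neg_neg]
      rw [hb'] at h
      apply no_central_sqrt_neg_one a _ ha2
      intro x
      have hx := h x
      calc a * x = a * (a * x * -a) := by rw [hx]
        _ = (a ^ 2) * x * -a := by rw [sq]; noncomm_ring
        _ = (-1 : Quaternion ℝ) * x * -a := by rw [ha2]
        _ = x * a := by noncomm_ring
    · intro h
      have hxa := h a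
      rw [show a * a * b = a ^ 2 * b by rw [sq], ha2] at hxa
      have hb' : b = a := by
        have : -b = -a := by rw [← hxa]; noncomm_ring
        exact neg_injective this
      rw [hb'] at h
      apply no_central_sqrt_neg_one a _ ha2
      intro x
      have hx := h x
      calc a * x = -(a * (a * x * a)) := by rw [hx]; noncomm_ring
        _ = -((a ^ 2) * x * a) := by rw [sq]; noncomm_ring
        _ = -((-1 : Quaternion ℝ) * x * a) := by rw [ha2]
        _ = x * a := by noncomm_ring
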